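/- For each integer k ≥ 3, write the polynomial representations of U_k and U_k⁻¹ as (π_S) and (π'_S) over nonempty subsets S ⊆ [k], in variables a_T indexed by nonempty subsets T ⊆ [k]. Then π_S(a) = ∑_{m=1}^{|S|} ∑ a_{T₁}a_{T₂}⋯a_{T_m}, where the inner sum ranges over all partitions of S into m unordered nonempty parts T₁,…,T_m; and π'_S(a) = a_S + ∑ a_{T₁}a_{T₂}, where the sum ranges over unordered pairs of nonempty sets T₁, T₂ with T₁ ⊔ T₂ = S. -/

import Mathlib

/-! Common framework: qubit gates, the Pauli group, the Clifford hierarchy,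
permutation gates, Toffoli gates and staircase form, descending multiplications,
multilinear polynomial representations. -/

/-- Vectors in `𝔽₂ⁿ`, indexing computational basis states. -/
abbrev QV (n : ℕ) := Fin n → ZMod 2

/-- `n`-qubit gates: `2ⁿ × 2ⁿ` complex matrices indexed by `𝔽₂ⁿ`. -/
abbrev QMat (n : ℕ) := Matrix (QV n) (QV n) ℂ

/-- Standard basis vector `eᵢ` of `𝔽₂ⁿ`. -/
def stdBasis (n : ℕ) (i : Fin n) : QV n := fun m => if m = i then 1 else 0

/-- The gate `X^u Z^z`, sending `|b⟩` to `(-1)^(z·b) |b+u⟩`. -/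
noncomputable def XZGate (n : ℕ) (u z : QV n) : QMat n :=
  fun a b => if a = b + u then (-1 : ℂ) ^ (∑ i, (z i).val * (b i).val) else 0

/-- The Pauli group on `n` qubits: gates `c·P₁⊗⋯⊗Pₙ`, `c ∈ {±1, ±i}`,
`Pᵢ ∈ {I,X,Y,Z}`, equivalently phases times `X^u Z^z`. -/
def PauliGroup (n : ℕ) : Set (QMat n) :=
  { P | ∃ (c : ℂ) (u z : QV n),
      (c = 1 ∨ c = -1 ∨ c = Complex.I ∨ c = -Complex.I) ∧ P = c • XZGate n u z }

/-- Level `k` of the Clifford hierarchy `𝒞ₖ` (level 1 is the Pauli group,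
level 2 the Clifford group; level 0 is junk/empty). -/
def CliffordLevel (n : ℕ) : ℕ → Set (QMat n)
  | 0 => ∅
  | 1 => PauliGroup n
  | (k+2) => { U | U ∈ Matrix.unitaryGroup (QV n) ℂ ∧
      ∀ P ∈ PauliGroup n, U * P * star U ∈ CliffordLevel n (k+1) }

/-- The permutation gate of a permutation `f` of `𝔽₂ⁿ`: sends `|v⟩` to `|f v⟩`. -/
noncomputable def permGate (n : ℕ) (f : QV n ≃ QV n) : QMat n :=
  fun a b => if a = f b then 1 else 0

/-- A diagonal gate. -/
def IsDiagonal (n : ℕ) (d : QMat n) : Prop := ∀ a b : QV n, a ≠ b → d a b = 0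

/-- A gate is semi-Clifford if it equals `φ₁ d φ₂` for Clifford `φ₁, φ₂` and diagonal `d`. -/
def IsSemiClifford (n : ℕ) (U : QMat n) : Prop :=
  ∃ φ₁ d φ₂ : QMat n, φ₁ ∈ CliffordLevel n 2 ∧ φ₂ ∈ CliffordLevel n 2 ∧
    IsDiagonal n d ∧ U = φ₁ * d * φ₂

/-- The underlying map of the Toffoli gate `TOF_{i,j,k}`: `v ↦ v + (vᵢvⱼ)·eₖ`. -/
def tofFun (n : ℕ) (i j k : Fin n) (v : QV n) : QV n :=
  fun m => if m = k then v m + v i * v j else v m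

/-- A map on `𝔽₂ⁿ` is in staircase form if it is a product (applied left-to-right)
of pairwise distinct Toffoli gates `TOF_{i,j,k}` with `i<j<k` and with targets
nondecreasing in the order the gates are applied. -/
def IsStaircase (n : ℕ) (g : QV n → QV n) : Prop :=
  ∃ L : List (Fin n × Fin n × Fin n),
    L.Nodup ∧
    (∀ t ∈ L, t.1 < t.2.1 ∧ t.2.1 < t.2.2) ∧
    List.Chain' (fun s t => s.2.2 ≤ t.2.2) L ∧
    g = fun v => L.foldl (fun w t => tofFun n t.1 t.2.1 t.2.2 w) v

/-- A descending multiplication on `𝔽₂ⁿ`: bilinear, associative, commutative,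
`eᵢeᵢ = 0`, and for `i < j`, `eᵢeⱼ ∈ span{eₖ : k > j}`. -/
def IsDescendingMul (n : ℕ) (mul : QV n → QV n → QV n) : Prop :=
  (∀ u v w : QV n, mul (u + v) w = mul u w + mul v w) ∧
  (∀ u v w : QV n, mul u (v + w) = mul u v + mul u w) ∧
  (∀ u v w : QV n, mul (mul u v) w = mul u (mul v w)) ∧
  (∀ u v : QV n, mul u v = mul v u) ∧
  (∀ i : Fin n, mul (stdBasis n i) (stdBasis n i) = 0) ∧
  (∀ i j : Fin n, i < j → ∀ m : Fin n, m ≤ j → mul (stdBasis n i) (stdBasis n j) m = 0)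

/-- The product `∏_{i ∈ l} eᵢ` under a multiplication, for a list `l` (junk `0` on `[]`). -/
def dmProdList (n : ℕ) (mul : QV n → QV n → QV n) : List (Fin n) → QV n
  | [] => 0
  | [i] => stdBasis n i
  | i :: j :: rest => mul (stdBasis n i) (dmProdList n mul (j :: rest))

/-- The product `∏_{i ∈ T} eᵢ` under a multiplication. -/
def dmProd (n : ℕ) (mul : QV n → QV n → QV n) (T : Finset (Fin n)) : QV n :=
  dmProdList n mul (T.sort (· ≤ ·))

/-- `g` is the map `∑_{i∈S} eᵢ ↦ ∑_{∅≠T⊆S} ∏_{i∈T} eᵢ` associated to a multiplication. -/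
def dmPiSpec (n : ℕ) (mul : QV n → QV n → QV n) (g : QV n → QV n) : Prop :=
  ∀ S : Finset (Fin n),
    g (∑ i ∈ S, stdBasis n i) = ∑ T ∈ S.powerset.erase ∅, dmProd n mul T

/-- The bilinear extension of `eᵢeⱼ := g(eᵢ+eⱼ) + eᵢ + eⱼ`. -/
def inducedMul (n : ℕ) (g : QV n → QV n) (u v : QV n) : QV n :=
  ∑ i : Fin n, ∑ j : Fin n,
    (u i * v j) • (g (stdBasis n i + stdBasis n j) + stdBasis n i + stdBasis n j)

/-- Coefficient of the monomial `∏_{i∈T} aᵢ` in the unique multilinear polynomial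
over `𝔽₂` representing `g : 𝔽₂ⁿ → 𝔽₂` (Möbius inversion over `𝔽₂`). -/
def mlCoeff (n : ℕ) (g : QV n → ZMod 2) (T : Finset (Fin n)) : ZMod 2 :=
  ∑ R ∈ T.powerset, g (∑ i ∈ R, stdBasis n i)

/-- Strictly lower triangular matrix. -/
def StrictLowerTri (n : ℕ) (A : Matrix (Fin n) (Fin n) (ZMod 2)) : Prop :=
  ∀ p q : Fin n, p ≤ q → A p q = 0

/-- Multiplication of basis vectors for the gate `U_k`: the basis of `𝔽₂^(2^k-1)` is
indexed by nonempty subsets `S ⊆ [k]`, encoded as indices `a` via the binary digits of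
`a+1`; `e_S e_T = e_{S∪T}` if `S ∩ T = ∅` and `e_S e_T = 0` otherwise. -/
def ukBasisMul (k : ℕ) (a b : Fin (2 ^ k - 1)) : QV (2 ^ k - 1) :=
  if (a.val + 1) &&& (b.val + 1) = 0 then
    (if h : a.val + b.val + 1 < 2 ^ k - 1 then stdBasis (2 ^ k - 1) ⟨a.val + b.val + 1, h⟩
     else 0)
  else 0

/-- The descending multiplication defining `U_k`, extended bilinearly. -/
def ukMul (k : ℕ) (u v : QV (2 ^ k - 1)) : QV (2 ^ k - 1) :=
  ∑ a : Fin (2 ^ k - 1), ∑ b : Fin (2 ^ k - 1), (u a * v b) • ukBasisMul k a b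

/-- `M` encodes a partition of the nonempty subset of `[k]` encoded by `s`: the parts
(encoded by the elements of `M`, via binary digits of `a+1`) are pairwise disjoint and
their union is the subset encoded by `s`. -/
def ukPartition (k : ℕ) (M : Finset (Fin (2 ^ k - 1))) (s : Fin (2 ^ k - 1)) : Prop :=
  (∀ a ∈ M, ∀ b ∈ M, a ≠ b → (a.val + 1) &&& (b.val + 1) = 0) ∧
  (∑ a ∈ M, (a.val + 1)) = s.val + 1

/-! ### Auxiliary lemmas -/


theorem myAnd_parity {x y : ℕ} (h : x &&& y = 0) : x % 2 = 0 ∨ y % 2 = 0 := by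
  have h0 : (x.testBit 0 && y.testBit 0) = false := by
    rw [← Nat.testBit_and, h, Nat.zero_testBit]
  rcases Nat.mod_two_eq_zero_or_one x with h1 | h1
  · exact Or.inl h1
  rcases Nat.mod_two_eq_zero_or_one y with h2 | h2
  · exact Or.inr h2
  · simp [Nat.testBit_zero, h1, h2] at h0

theorem myAnd_div2 {x y : ℕ} (h : x &&& y = 0) : x / 2 &&& y / 2 = 0 := by
  apply Nat.eq_of_testBit_eq
  intro i
  rw [Nat.testBit_and, Nat.testBit_div_two, Nat.testBit_div_two, ← Nat.testBit_and, h,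
    Nat.zero_testBit, Nat.zero_testBit]

theorem testBit_add_disj : ∀ (j x y : ℕ), x &&& y = 0 →
    (x + y).testBit j = (x.testBit j || y.testBit j)
  | 0, x, y, h => by
    rcases myAnd_parity h with h0 | h0 <;>
      · simp only [Nat.testBit_zero]
        rcases Nat.mod_two_eq_zero_or_one x with h1 | h1 <;>
          rcases Nat.mod_two_eq_zero_or_one y with h2 | h2 <;>
            simp [Nat.add_mod, h1, h2] <;> omega
  | j+1, x, y, h => by
    have hd : (x + y) / 2 = x / 2 + y / 2 := by
      rcases myAnd_parity h with h0 | h0 <;> omega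
    rw [Nat.testBit_add_one, Nat.testBit_add_one, Nat.testBit_add_one, hd,
      testBit_add_disj j _ _ (myAnd_div2 h)]

section SumBits

variable {α : Type*} (g : α → ℕ)

theorem testBit_listSum : ∀ (l : List α), l.Pairwise (fun a b => g a &&& g b = 0) →
    ∀ j, ((l.map g).sum).testBit j = true ↔ ∃ a ∈ l, (g a).testBit j = true
  | [], _, j => by simp
  | a :: l, hp, j => by
    rcases List.pairwise_cons.mp hp with ⟨hd, hp'⟩
    have hdis : g a &&& (l.map g).sum = 0 := by
      apply Nat.eq_of_testBit_eq
      intro i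
      rw [Nat.testBit_and, Nat.zero_testBit]
      by_cases hga : (g a).testBit i
      · have : ¬ ((l.map g).sum).testBit i = true := by
          rw [testBit_listSum l hp' i]
          rintro ⟨b, hb, hgb⟩
          have h0 : ((g a &&& g b).testBit i) = false := by rw [hd b hb, Nat.zero_testBit]
          rw [Nat.testBit_and, hga, hgb] at h0
          simp at h0
        simp [hga, this]
      · simp [hga]
    rw [List.map_cons, List.sum_cons, testBit_add_disj j _ _ hdis]
    simp [testBit_listSum l hp' j]

theorem and_listSum {y : ℕ} (l : List α) (hp : l.Pairwise (fun a b => g a &&& g b = 0))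
    (hy : ∀ a ∈ l, g a &&& y = 0) : (l.map g).sum &&& y = 0 := by
  apply Nat.eq_of_testBit_eq
  intro i
  rw [Nat.testBit_and, Nat.zero_testBit]
  by_cases hs : ((l.map g).sum).testBit i
  · obtain ⟨a, ha, hga⟩ := (testBit_listSum g l hp i).mp hs
    have h0 : ((g a &&& y).testBit i) = false := by rw [hy a ha, Nat.zero_testBit]
    rw [Nat.testBit_and, hga] at h0
    simp at h0
    simp [hs, h0]
  · simp [hs]

theorem listSum_lt_two_pow {K : ℕ} (l : List α) (hp : l.Pairwise (fun a b => g a &&& g b = 0))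
    (hlt : ∀ a ∈ l, g a < 2 ^ K) : (l.map g).sum < 2 ^ K := by
  apply Nat.lt_pow_two_of_testBit
  intro i hi
  rw [← Bool.not_eq_true, testBit_listSum g l hp i]
  rintro ⟨a, ha, hga⟩
  have : g a < 2 ^ i := lt_of_lt_of_le (hlt a ha) (Nat.pow_le_pow_right (by norm_num) hi)
  rw [Nat.testBit_lt_two_pow this] at hga
  exact Bool.false_ne_true hga

end SumBits

section FinsetBits

variable {α : Type*}

theorem pairwise_toList (g : α → ℕ) (M : Finset α)
    (hp : ∀ a ∈ M, ∀ b ∈ M, a ≠ b → g a &&& g b = 0) :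
    M.toList.Pairwise (fun a b => g a &&& g b = 0) :=
  M.nodup_toList.pairwise_of_forall_ne fun a ha b hb hab =>
    hp a (Finset.mem_toList.mp ha) b (Finset.mem_toList.mp hb) hab

theorem testBit_finsetSum (g : α → ℕ) (M : Finset α)
    (hp : ∀ a ∈ M, ∀ b ∈ M, a ≠ b → g a &&& g b = 0) (j : ℕ) :
    (∑ a ∈ M, g a).testBit j = true ↔ ∃ a ∈ M, (g a).testBit j = true := by
  rw [← Finset.sum_map_toList, testBit_listSum g M.toList (pairwise_toList g M hp) j]
  simp [Finset.mem_toList]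

theorem and_finsetSum (g : α → ℕ) {y : ℕ} (M : Finset α)
    (hp : ∀ a ∈ M, ∀ b ∈ M, a ≠ b → g a &&& g b = 0)
    (hy : ∀ a ∈ M, g a &&& y = 0) : (∑ a ∈ M, g a) &&& y = 0 := by
  rw [← Finset.sum_map_toList]
  exact and_listSum g M.toList (pairwise_toList g M hp)
    fun a ha => hy a (Finset.mem_toList.mp ha)

end FinsetBits


section Partitions

variable {k : ℕ}

/-- Decidability of `ukPartition`. -/
instance ukPartitionDecidable (k : ℕ) (M : Finset (Fin (2 ^ k - 1))) (s : Fin (2 ^ k - 1)) :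
    Decidable (ukPartition k M s) :=
  decidable_of_iff ((∀ a ∈ M, ∀ b ∈ M, a ≠ b → (a.val + 1) &&& (b.val + 1) = 0) ∧
    (∑ a ∈ M, (a.val + 1)) = s.val + 1) Iff.rfl

/-- The set of partitions of `s`. -/
def parts (k : ℕ) (s : Fin (2 ^ k - 1)) : Finset (Finset (Fin (2 ^ k - 1))) :=
  Finset.univ.filter (fun M => ukPartition k M s)

theorem mem_parts {s : Fin (2 ^ k - 1)} {M : Finset (Fin (2 ^ k - 1))} :
    M ∈ parts k s ↔ ukPartition k M s := by simp [parts]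

theorem ukPartition_nonempty {M : Finset (Fin (2 ^ k - 1))} {s : Fin (2 ^ k - 1)}
    (h : ukPartition k M s) : M.Nonempty := by
  rcases Finset.eq_empty_or_nonempty M with rfl | h'
  · exact absurd h.2 (by simp)
  · exact h'

theorem ukPartition_singleton (s : Fin (2 ^ k - 1)) : ukPartition k {s} s := by
  constructor
  · intro a ha b hb hab
    simp only [Finset.mem_singleton] at ha hb
    exact absurd (ha.trans hb.symm) hab
  · simp

theorem ukPartition_card_one {M : Finset (Fin (2 ^ k - 1))} {s : Fin (2 ^ k - 1)}
    (h : ukPartition k M s) (hc : M.card = 1) : M = {s} := by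
  obtain ⟨a, rfl⟩ := Finset.card_eq_one.mp hc
  have h2 := h.2
  simp only [Finset.sum_singleton] at h2
  congr 1
  exact Fin.ext (by omega)

theorem part_bit {M : Finset (Fin (2 ^ k - 1))} {s : Fin (2 ^ k - 1)}
    (h : ukPartition k M s) {c : Fin (2 ^ k - 1)} (hc : c ∈ M) {j : ℕ}
    (hj : (c.val + 1).testBit j = true) : ((s.val : ℕ) + 1).testBit j = true := by
  have := (testBit_finsetSum (fun a : Fin (2 ^ k - 1) => a.val + 1) M h.1 j).mpr ⟨c, hc, hj⟩
  rwa [h.2] at this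

theorem parts_cross_disj {a b : Fin (2 ^ k - 1)} (hab : (a.val + 1) &&& (b.val + 1) = 0)
    {P Q : Finset (Fin (2 ^ k - 1))} (hP : ukPartition k P a) (hQ : ukPartition k Q b) :
    ∀ c ∈ P, ∀ d ∈ Q, (c.val + 1) &&& (d.val + 1) = 0 := by
  intro c hc d hd
  apply Nat.eq_of_testBit_eq
  intro j
  rw [Nat.testBit_and, Nat.zero_testBit]
  by_cases h1 : (c.val + 1).testBit j
  · by_cases h2 : (d.val + 1).testBit j
    · exfalso
      have ha := part_bit hP hc h1
      have hb := part_bit hQ hd h2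
      have : ((a.val + 1) &&& (b.val + 1)).testBit j = true := by
        rw [Nat.testBit_and, ha, hb]; rfl
      rw [hab, Nat.zero_testBit] at this
      exact Bool.false_ne_true this
    · simp [h2]
  · simp [h1]

theorem parts_disjoint {a b : Fin (2 ^ k - 1)} (hab : (a.val + 1) &&& (b.val + 1) = 0)
    {P Q : Finset (Fin (2 ^ k - 1))} (hP : ukPartition k P a) (hQ : ukPartition k Q b) :
    Disjoint P Q := by
  rw [Finset.disjoint_left]
  intro c hcP hcQ
  have := parts_cross_disj hab hP hQ c hcP c hcQ
  rw [Nat.and_self] at this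
  omega

theorem parts_union {a b s : Fin (2 ^ k - 1)} (hab : (a.val + 1) &&& (b.val + 1) = 0)
    (hsum : (a.val + 1) + (b.val + 1) = s.val + 1)
    {P Q : Finset (Fin (2 ^ k - 1))} (hP : ukPartition k P a) (hQ : ukPartition k Q b) :
    ukPartition k (P ∪ Q) s := by
  constructor
  · intro x hx y hy hxy
    rcases Finset.mem_union.mp hx with hx' | hx' <;> rcases Finset.mem_union.mp hy with hy' | hy'
    · exact hP.1 x hx' y hy' hxy
    · exact parts_cross_disj hab hP hQ x hx' y hy'
    · rw [Nat.and_comm]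
      exact parts_cross_disj hab hP hQ y hy' x hx'
    · exact hQ.1 x hx' y hy' hxy
  · rw [Finset.sum_union (parts_disjoint hab hP hQ), hP.2, hQ.2, hsum]

end Partitions

section MLCoeff

variable {N : ℕ}

theorem sum_stdBasis_apply (R : Finset (Fin N)) (a : Fin N) :
    (∑ i ∈ R, stdBasis N i) a = if a ∈ R then 1 else 0 := by
  rw [Finset.sum_apply]
  simp only [stdBasis]
  rw [Finset.sum_ite_eq R a (fun _ => (1 : ZMod 2))]

theorem prodIndicator01 (R M : Finset (Fin N)) :
    (∏ a ∈ M, if a ∈ R then (1 : ZMod 2) else 0) = if M ⊆ R then 1 else 0 := by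
  by_cases h : M ⊆ R
  · rw [if_pos h]
    exact Finset.prod_eq_one fun a ha => if_pos (h ha)
  · rw [if_neg h]
    obtain ⟨a, haM, haR⟩ := Finset.not_subset.mp h
    exact Finset.prod_eq_zero haM (if_neg haR)

theorem mlCoeff_poly (𝓜 : Finset (Finset (Fin N))) (T : Finset (Fin N)) :
    mlCoeff N (fun v => ∑ M ∈ 𝓜, ∏ a ∈ M, v a) T = if T ∈ 𝓜 then 1 else 0 := by
  unfold mlCoeff
  have step1 : ∀ R ∈ T.powerset, (∑ M ∈ 𝓜, ∏ a ∈ M, (∑ i ∈ R, stdBasis N i) a)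
      = ∑ M ∈ 𝓜, if M ⊆ R then (1 : ZMod 2) else 0 := by
    intro R _
    refine Finset.sum_congr rfl fun M _ => ?_
    rw [← prodIndicator01 R M]
    exact Finset.prod_congr rfl fun a _ => by rw [sum_stdBasis_apply]
  rw [Finset.sum_congr rfl step1, Finset.sum_comm]
  have step2 : ∀ M ∈ 𝓜, (∑ R ∈ T.powerset, if M ⊆ R then (1 : ZMod 2) else 0)
      = if M = T then 1 else 0 := by
    intro M _
    rw [Finset.sum_boole]
    have hf : T.powerset.filter (fun R => M ⊆ R) = Finset.Icc M T := by
      ext R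
      simp [Finset.mem_Icc, Finset.mem_powerset, and_comm]
    rw [hf]
    by_cases hMT : M ⊆ T
    · rw [Finset.card_Icc_finset hMT]
      by_cases hEq : M = T
      · rw [if_pos hEq, hEq]
        simp
      · rw [if_neg hEq]
        have hlt : M.card < T.card :=
          Finset.card_lt_card (lt_of_le_of_ne hMT hEq)
        have : T.card - M.card ≠ 0 := by omega
        obtain ⟨m, hm⟩ := Nat.exists_eq_succ_of_ne_zero this
        rw [hm]
        push_cast
        rw [pow_succ]
        have h2 : (2 : ZMod 2) = 0 := rfl
        rw [h2, mul_zero]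
    · have : Finset.Icc M T = ∅ := Finset.Icc_eq_empty (fun hle => hMT hle)
      rw [this]
      have hEq : M ≠ T := fun h => hMT (h ▸ subset_refl T)
      simp [hEq]
  rw [Finset.sum_congr rfl step2, Finset.sum_ite_eq' 𝓜 T (fun _ => (1 : ZMod 2))]

theorem ite_one_zero_eq_one {P : Prop} [Decidable P] :
    (if P then (1 : ZMod 2) else 0) = 1 ↔ P := by
  split <;> simp_all

end MLCoeff

section UkMulBasics

variable {k : ℕ}

theorem ukMul_stdBasis (a b : Fin (2 ^ k - 1)) :
    ukMul k (stdBasis (2 ^ k - 1) a) (stdBasis (2 ^ k - 1) b) = ukBasisMul k a b := by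
  unfold ukMul
  have h1 : ∀ a' : Fin (2 ^ k - 1),
      (∑ b' : Fin (2 ^ k - 1), (stdBasis (2 ^ k - 1) a a' * stdBasis (2 ^ k - 1) b b') •
        ukBasisMul k a' b')
      = stdBasis (2 ^ k - 1) a a' • ukBasisMul k a' b := by
    intro a'
    rw [Finset.sum_eq_single b]
    · simp [stdBasis]
    · intro b' _ hb'
      simp [stdBasis, hb']
    · simp
  rw [Finset.sum_congr rfl (fun a' _ => h1 a'), Finset.sum_eq_single a]
  · simp [stdBasis]
  · intro a' _ ha'
    simp [stdBasis, ha']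
  · simp

theorem ukMul_zero_right (u : QV (2 ^ k - 1)) : ukMul k u 0 = 0 := by
  simp [ukMul]

end UkMulBasics

section DmProd

variable {k : ℕ}

/-- Specification of `dmProdList` for the multiplication `ukMul k`. -/
theorem dmProdList_spec : ∀ (l : List (Fin (2 ^ k - 1))), l ≠ [] →
    (∀ _ : l.Pairwise (fun a b => (a.val + 1) &&& (b.val + 1) = 0),
      ∃ c : Fin (2 ^ k - 1), c.val + 1 = (l.map (fun a => a.val + 1)).sum ∧
        dmProdList (2 ^ k - 1) (ukMul k) l = stdBasis (2 ^ k - 1) c) ∧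
    (¬ l.Pairwise (fun a b => (a.val + 1) &&& (b.val + 1) = 0) →
      dmProdList (2 ^ k - 1) (ukMul k) l = 0)
  | [], h => absurd rfl h
  | [i], _ => by
    constructor
    · intro _
      exact ⟨i, by simp, rfl⟩
    · intro hp
      exact absurd (List.pairwise_singleton _ i) hp
  | i :: j :: r, _ => by
    have ihr := dmProdList_spec (j :: r) (by simp)
    have hstep : dmProdList (2 ^ k - 1) (ukMul k) (i :: j :: r)
        = ukMul k (stdBasis (2 ^ k - 1) i) (dmProdList (2 ^ k - 1) (ukMul k) (j :: r)) := rfl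
    constructor
    · intro hp
      rcases List.pairwise_cons.mp hp with ⟨hd, hp'⟩
      obtain ⟨c, hc, heq⟩ := ihr.1 hp'
      have hpl : (j :: r).Pairwise (fun a b => (a.val + 1) &&& (b.val + 1) = 0) := hp'
      have hdisj : (i.val + 1) &&& (c.val + 1) = 0 := by
        rw [hc, Nat.and_comm]
        exact and_listSum _ _ hpl fun b hb => by rw [Nat.and_comm]; exact hd b hb
      have hsum : (i.val + 1) + (c.val + 1) < 2 ^ k := by
        have : ((i :: j :: r).map (fun a : Fin (2 ^ k - 1) => a.val + 1)).sum < 2 ^ k := by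
          apply listSum_lt_two_pow _ _ hp
          intro a _
          have := a.isLt
          have h2 : 1 ≤ 2 ^ k := Nat.one_le_two_pow
          omega
        rw [List.map_cons, List.sum_cons, ← hc] at this
        exact this
      have hlt : i.val + c.val + 1 < 2 ^ k - 1 := by omega
      refine ⟨⟨i.val + c.val + 1, hlt⟩, ?_, ?_⟩
      · show i.val + c.val + 1 + 1 = _
        rw [List.map_cons, List.sum_cons, ← hc]
        omega
      · rw [hstep, heq, ukMul_stdBasis]
        unfold ukBasisMul
        rw [if_pos hdisj, dif_pos hlt]
    · intro hp
      rw [List.pairwise_cons, not_and_or] at hp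
      rcases hp with hd | hp'
      · push_neg at hd
        obtain ⟨b, hb, hdb⟩ := hd
        by_cases hp' : (j :: r).Pairwise (fun a b => (a.val + 1) &&& (b.val + 1) = 0)
        · obtain ⟨c, hc, heq⟩ := ihr.1 hp'
          rw [hstep, heq, ukMul_stdBasis]
          unfold ukBasisMul
          rw [if_neg]
          intro h0
          apply hdb
          apply Nat.eq_of_testBit_eq
          intro t
          rw [Nat.testBit_and, Nat.zero_testBit]
          by_cases h1 : (i.val + 1).testBit t
          · by_cases h2 : (b.val + 1).testBit t
            · exfalso
              have hcb : (c.val + 1).testBit t = true := by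
                rw [hc, testBit_listSum _ _ hp' t]
                exact ⟨b, hb, h2⟩
              have : ((i.val + 1) &&& (c.val + 1)).testBit t = true := by
                rw [Nat.testBit_and, h1, hcb]; rfl
              rw [h0, Nat.zero_testBit] at this
              exact Bool.false_ne_true this
            · simp [h2]
          · simp [h1]
        · rw [hstep, ihr.2 hp', ukMul_zero_right]
      · rw [hstep, ihr.2 hp', ukMul_zero_right]

theorem sort_pairwise_iff (T : Finset (Fin (2 ^ k - 1))) :
    (T.sort (· ≤ ·)).Pairwise (fun a b => (a.val + 1) &&& (b.val + 1) = 0) ↔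
      ∀ a ∈ T, ∀ b ∈ T, a ≠ b → (a.val + 1) &&& (b.val + 1) = 0 := by
  constructor
  · intro hp a ha b hb hab
    haveI : Std.Symm (fun a b : Fin (2 ^ k - 1) => (a.val + 1) &&& (b.val + 1) = 0) :=
      ⟨fun x y h => by rw [Nat.and_comm]; exact h⟩
    exact hp.forall
      (by rwa [Finset.mem_sort]) (by rwa [Finset.mem_sort]) hab
  · intro h
    exact (Finset.sort_nodup T _).pairwise_of_forall_ne fun a ha b hb hab =>
      h a (by rwa [Finset.mem_sort] at ha) b (by rwa [Finset.mem_sort] at hb) hab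

theorem dmProd_eq (T : Finset (Fin (2 ^ k - 1))) (hT : T.Nonempty) (s : Fin (2 ^ k - 1)) :
    dmProd (2 ^ k - 1) (ukMul k) T s = if ukPartition k T s then 1 else 0 := by
  have hsortsum : ((T.sort (· ≤ ·)).map (fun a : Fin (2 ^ k - 1) => a.val + 1)).sum
      = ∑ a ∈ T, (a.val + 1) := by
    rw [← Finset.sum_map_toList]
    apply List.Perm.sum_eq
    apply List.Perm.map
    apply List.perm_of_nodup_nodup_toFinset_eq (Finset.sort_nodup T _) T.nodup_toList
    rw [Finset.sort_toFinset, Finset.toList_toFinset]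
  have hne : T.sort (· ≤ ·) ≠ [] := by
    intro h
    obtain ⟨a, ha⟩ := hT
    have := (Finset.mem_sort (α := Fin (2 ^ k - 1)) (· ≤ ·)).mpr ha
    rw [h] at this
    exact absurd this List.not_mem_nil
  unfold dmProd
  by_cases hp : (T.sort (· ≤ ·)).Pairwise (fun a b => (a.val + 1) &&& (b.val + 1) = 0)
  · obtain ⟨c, hc, heq⟩ := (dmProdList_spec _ hne).1 hp
    rw [heq]
    have hpw := (sort_pairwise_iff T).mp hp
    by_cases hsc : s = c
    · subst hsc
      rw [if_pos ⟨hpw, by rw [← hsortsum, ← hc]⟩]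
      simp [stdBasis]
    · rw [if_neg]
      · simp [stdBasis, hsc]
      · rintro ⟨-, hsum⟩
        apply hsc
        apply Fin.ext
        rw [← hsortsum] at hsum
        omega
  · rw [(dmProdList_spec _ hne).2 hp, if_neg]
    · rfl
    · rintro ⟨hpw, -⟩
      exact hp ((sort_pairwise_iff T).mpr hpw)

end DmProd

section TheMap

variable {k : ℕ}

/-- The forward map `U_k`. -/
def Fmap (k : ℕ) (v : QV (2 ^ k - 1)) : QV (2 ^ k - 1) :=
  fun s => ∑ M ∈ parts k s, ∏ a ∈ M, v a

/-- The two-element partitions of `s`. -/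
def parts2 (k : ℕ) (s : Fin (2 ^ k - 1)) : Finset (Finset (Fin (2 ^ k - 1))) :=
  (parts k s).filter (fun M => M.card = 2)

/-- The inverse map `U_k⁻¹`. -/
def Gmap (k : ℕ) (v : QV (2 ^ k - 1)) : QV (2 ^ k - 1) :=
  fun s => ∑ M ∈ insert {s} (parts2 k s), ∏ a ∈ M, v a

theorem singleton_not_mem_parts2 (s : Fin (2 ^ k - 1)) : ({s} : Finset _) ∉ parts2 k s := by
  simp [parts2]

theorem Gmap_apply (v : QV (2 ^ k - 1)) (s : Fin (2 ^ k - 1)) :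
    Gmap k v s = v s + ∑ M ∈ parts2 k s, ∏ a ∈ M, v a := by
  unfold Gmap
  rw [Finset.sum_insert (singleton_not_mem_parts2 s), Finset.prod_singleton]

/-- Ordered pairs representing two-element partitions. -/
def pairsSet (k : ℕ) (s : Fin (2 ^ k - 1)) : Finset (Fin (2 ^ k - 1) × Fin (2 ^ k - 1)) :=
  Finset.univ.filter (fun p => p.1 < p.2 ∧ ukPartition k {p.1, p.2} s)

theorem parts2_eq_image (s : Fin (2 ^ k - 1)) :
    parts2 k s = (pairsSet k s).image (fun p => ({p.1, p.2} : Finset (Fin (2 ^ k - 1)))) := by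
  ext M
  simp only [parts2, pairsSet, Finset.mem_filter, Finset.mem_image, Finset.mem_univ, true_and,
    mem_parts]
  constructor
  · rintro ⟨hM, hc⟩
    obtain ⟨a, b, hab, rfl⟩ := Finset.card_eq_two.mp hc
    rcases lt_or_gt_of_ne hab with h | h
    · exact ⟨(a, b), ⟨h, hM⟩, rfl⟩
    · exact ⟨(b, a), ⟨h, by rwa [Finset.pair_comm]⟩, Finset.pair_comm b a⟩
  · rintro ⟨⟨a, b⟩, ⟨hlt, hP⟩, rfl⟩
    exact ⟨hP, Finset.card_pair (ne_of_lt hlt)⟩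

theorem pairsSet_inj (s : Fin (2 ^ k - 1)) :
    ∀ p ∈ pairsSet k s, ∀ q ∈ pairsSet k s,
      ({p.1, p.2} : Finset (Fin (2 ^ k - 1))) = {q.1, q.2} → p = q := by
  rintro ⟨a, b⟩ hp ⟨c, d⟩ hq h
  simp only [pairsSet, Finset.mem_filter, Finset.mem_univ, true_and] at hp hq
  have hac : a = c ∨ a = d := by
    have : a ∈ ({c, d} : Finset (Fin (2 ^ k - 1))) := by rw [← h]; simp
    simpa using this
  have hbc : b = c ∨ b = d := by
    have : b ∈ ({c, d} : Finset (Fin (2 ^ k - 1))) := by rw [← h]; simp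
    simpa using this
  have hca : c = a ∨ c = b := by
    have : c ∈ ({a, b} : Finset (Fin (2 ^ k - 1))) := by rw [h]; simp
    simpa using this
  have h1 := hp.1
  have h2 := hq.1
  rw [Fin.lt_def] at h1 h2
  have v1 : a.val = c.val ∨ a.val = d.val := hac.imp (congrArg Fin.val) (congrArg Fin.val)
  have v2 : b.val = c.val ∨ b.val = d.val := hbc.imp (congrArg Fin.val) (congrArg Fin.val)
  have v3 : c.val = a.val ∨ c.val = b.val := hca.imp (congrArg Fin.val) (congrArg Fin.val)
  have key : a.val = c.val ∧ b.val = d.val := by omega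
  have e1 : a = c := Fin.ext key.1
  have e2 : b = d := Fin.ext key.2
  rw [e1, e2]

/-- The splittings of a partition into an ordered pair of sub-partitions. -/
def splits (k : ℕ) (R : Finset (Fin (2 ^ k - 1))) : Finset (Finset (Fin (2 ^ k - 1))) :=
  R.powerset.filter (fun P => P ≠ ∅ ∧ P ≠ R ∧
    (∑ a ∈ P, (a.val + 1)) < ∑ a ∈ R \ P, (a.val + 1))

theorem sum_mask_pos {P : Finset (Fin (2 ^ k - 1))} (hP : P.Nonempty) :
    1 ≤ ∑ a ∈ P, (a.val + 1) := by
  obtain ⟨a, ha⟩ := hP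
  calc 1 ≤ a.val + 1 := by omega
  _ ≤ ∑ a ∈ P, (a.val + 1) :=
    Finset.single_le_sum (f := fun a : Fin (2 ^ k - 1) => a.val + 1)
      (fun _ _ => Nat.zero_le _) ha

theorem sub_partition {R : Finset (Fin (2 ^ k - 1))} {s : Fin (2 ^ k - 1)}
    (hR : ukPartition k R s) {P : Finset (Fin (2 ^ k - 1))} (hPR : P ⊆ R) :
    (∀ a ∈ P, ∀ b ∈ P, a ≠ b → (a.val + 1) &&& (b.val + 1) = 0) := by
  intro a ha b hb hab
  exact hR.1 a (hPR ha) b (hPR hb) hab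

theorem cross_sum_disj {R : Finset (Fin (2 ^ k - 1))} {s : Fin (2 ^ k - 1)}
    (hR : ukPartition k R s) {P : Finset (Fin (2 ^ k - 1))} (hPR : P ⊆ R) :
    (∑ a ∈ P, (a.val + 1)) &&& (∑ a ∈ R \ P, (a.val + 1)) = 0 := by
  apply and_finsetSum _ _ (sub_partition hR hPR)
  intro c hc
  rw [Nat.and_comm]
  apply and_finsetSum _ _ (sub_partition hR (Finset.sdiff_subset))
  intro d hd
  have hdP : d ∉ P := (Finset.mem_sdiff.mp hd).2
  have hdc : d ≠ c := fun h => hdP (h ▸ hc)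
  exact hR.1 d (Finset.mem_sdiff.mp hd).1 c (hPR hc) hdc

theorem cross_sum_ne {R : Finset (Fin (2 ^ k - 1))} {s : Fin (2 ^ k - 1)}
    (hR : ukPartition k R s) {P : Finset (Fin (2 ^ k - 1))} (hPR : P ⊆ R) (hP : P.Nonempty) :
    (∑ a ∈ P, (a.val + 1)) ≠ ∑ a ∈ R \ P, (a.val + 1) := by
  intro h
  have := cross_sum_disj hR hPR
  rw [← h, Nat.and_self] at this
  have := sum_mask_pos hP
  omega

theorem splits_card {R : Finset (Fin (2 ^ k - 1))} {s : Fin (2 ^ k - 1)}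
    (hR : ukPartition k R s) :
    ((splits k R).card : ZMod 2) = if R.card = 1 then 0 else 1 := by
  classical
  set A := splits k R with hA
  set B := R.powerset.filter (fun P => P ≠ ∅ ∧ P ≠ R ∧
    (∑ a ∈ R \ P, (a.val + 1)) < ∑ a ∈ P, (a.val + 1)) with hB
  have hmem : ∀ {P : Finset (Fin (2 ^ k - 1))}, P ⊆ R → P ≠ ∅ → P ≠ R →
      ((R \ P) ⊆ R ∧ R \ P ≠ ∅ ∧ R \ P ≠ R) := by
    intro P hPR hPne hPR'
    refine ⟨Finset.sdiff_subset, ?_, ?_⟩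
    · rw [← Finset.nonempty_iff_ne_empty, Finset.sdiff_nonempty]
      intro hle
      exact hPR' (Finset.Subset.antisymm hPR hle)
    · intro h
      rw [Finset.sdiff_eq_self_iff_disjoint] at h
      obtain ⟨x, hx⟩ := Finset.nonempty_iff_ne_empty.mpr hPne
      exact absurd hx (Finset.disjoint_left.mp h (hPR hx))
  have hcardAB : A.card = B.card := by
    apply Finset.card_nbij' (fun P => R \ P) (fun P => R \ P)
    · intro P hP
      simp only [Finset.mem_coe, hA, splits, Finset.mem_filter, Finset.mem_powerset] at hP
      obtain ⟨hPR, hne, hne', hlt⟩ := hP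
      obtain ⟨q1, q2, q3⟩ := hmem hPR hne hne'
      simp only [Finset.mem_coe, hB, Finset.mem_filter, Finset.mem_powerset]
      rw [Finset.sdiff_sdiff_eq_self hPR]
      exact ⟨q1, q2, q3, hlt⟩
    · intro P hP
      simp only [Finset.mem_coe, hB, Finset.mem_filter, Finset.mem_powerset] at hP
      obtain ⟨hPR, hne, hne', hlt⟩ := hP
      obtain ⟨q1, q2, q3⟩ := hmem hPR hne hne'
      simp only [Finset.mem_coe, hA, splits, Finset.mem_filter, Finset.mem_powerset]
      rw [Finset.sdiff_sdiff_eq_self hPR]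
      exact ⟨q1, q2, q3, hlt⟩
    · intro P hP
      simp only [Finset.mem_coe, hA, splits, Finset.mem_filter, Finset.mem_powerset] at hP
      exact Finset.sdiff_sdiff_eq_self hP.1
    · intro P hP
      simp only [Finset.mem_coe, hB, Finset.mem_filter, Finset.mem_powerset] at hP
      exact Finset.sdiff_sdiff_eq_self hP.1
  have hdisj : Disjoint A B := by
    rw [Finset.disjoint_left]
    intro P hPA hPB
    simp only [hA, splits, Finset.mem_filter] at hPA
    simp only [hB, Finset.mem_filter] at hPB
    exact absurd (hPA.2.2.2.trans hPB.2.2.2) (lt_irrefl _)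
  have hunion : A ∪ B = R.powerset.filter (fun P => P ≠ ∅ ∧ P ≠ R) := by
    ext P
    simp only [hA, hB, splits, Finset.mem_union, Finset.mem_filter, Finset.mem_powerset]
    constructor
    · rintro (⟨h1, h2, h3, _⟩ | ⟨h1, h2, h3, _⟩) <;> exact ⟨h1, h2, h3⟩
    · rintro ⟨h1, h2, h3⟩
      have hne := cross_sum_ne hR h1 (Finset.nonempty_iff_ne_empty.mpr h2)
      rcases lt_or_gt_of_ne hne with h | h
      · exact Or.inl ⟨h1, h2, h3, h⟩
      · exact Or.inr ⟨h1, h2, h3, h⟩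
  have hRne : R.Nonempty := ukPartition_nonempty hR
  have hRcard : 1 ≤ R.card := Finset.card_pos.mpr hRne
  have hCcard : (R.powerset.filter (fun P => P ≠ ∅ ∧ P ≠ R)).card = 2 ^ R.card - 2 := by
    have : R.powerset.filter (fun P => P ≠ ∅ ∧ P ≠ R)
        = R.powerset \ {∅, R} := by
      ext P
      simp only [Finset.mem_filter, Finset.mem_sdiff, Finset.mem_powerset, Finset.mem_insert,
        Finset.mem_singleton]
      tauto
    rw [this, Finset.card_sdiff_of_subset]
    · rw [Finset.card_powerset]
      congr 1
      rw [Finset.card_insert_of_notMem (by simpa using hRne.ne_empty.symm),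
        Finset.card_singleton]
    · intro P hP
      simp only [Finset.mem_insert, Finset.mem_singleton] at hP
      rcases hP with rfl | rfl
      · exact Finset.empty_mem_powerset _
      · exact Finset.mem_powerset_self _
  have htwice : A.card + A.card = 2 ^ R.card - 2 := by
    rw [← hCcard, ← hunion, Finset.card_union_of_disjoint hdisj, hcardAB]
  have hpow : 2 ^ R.card = 2 * 2 ^ (R.card - 1) := by
    conv_lhs => rw [show R.card = (R.card - 1) + 1 by omega]
    rw [pow_succ]
    ring
  have h1le : 1 ≤ 2 ^ (R.card - 1) := Nat.one_le_two_pow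
  have hAcard : A.card = 2 ^ (R.card - 1) - 1 := by omega
  by_cases hm : R.card = 1
  · rw [if_pos hm]
    have h0 : A.card = 0 := by
      rw [hAcard, hm]
      norm_num
    rw [h0, Nat.cast_zero]
  · rw [if_neg hm]
    have heven : 2 ∣ 2 ^ (R.card - 1) := dvd_pow_self 2 (by omega)
    have hodd : A.card % 2 = 1 := by omega
    rw [← ZMod.natCast_mod A.card 2, hodd, Nat.cast_one]

end TheMap

section GFsection

variable {k : ℕ}

/-- Conversion from a mask value back to an index (junk value `s` out of range). -/
def toFin (k : ℕ) (s : Fin (2 ^ k - 1)) (m : ℕ) : Fin (2 ^ k - 1) :=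
  if h : m - 1 < 2 ^ k - 1 then ⟨m - 1, h⟩ else s

theorem toFin_mask (s a : Fin (2 ^ k - 1)) : toFin k s (a.val + 1) = a := by
  unfold toFin
  rw [dif_pos (by simpa using a.isLt)]
  exact Fin.ext (by simp)

theorem parts_card_one (s : Fin (2 ^ k - 1)) :
    (parts k s).filter (fun R => R.card = 1) = {{s}} := by
  ext M
  simp only [Finset.mem_filter, mem_parts, Finset.mem_singleton]
  constructor
  · rintro ⟨h1, h2⟩
    exact ukPartition_card_one h1 h2
  · rintro rfl
    exact ⟨ukPartition_singleton s, Finset.card_singleton _⟩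

theorem GF (v : QV (2 ^ k - 1)) (s : Fin (2 ^ k - 1)) : Gmap k (Fmap k v) s = v s := by
  classical
  rw [Gmap_apply]
  have hquad : ∑ M ∈ parts2 k s, ∏ a ∈ M, Fmap k v a
      = ∑ z ∈ (pairsSet k s).sigma (fun p => (parts k p.1) ×ˢ (parts k p.2)),
          ∏ a ∈ z.2.1 ∪ z.2.2, v a := by
    rw [parts2_eq_image, Finset.sum_image (pairsSet_inj s), Finset.sum_sigma]
    apply Finset.sum_congr rfl
    rintro ⟨a, b⟩ hp
    simp only [pairsSet, Finset.mem_filter, Finset.mem_univ, true_and] at hp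
    obtain ⟨hlt, hS⟩ := hp
    have hne : a ≠ b := ne_of_lt hlt
    have hab : (a.val + 1) &&& (b.val + 1) = 0 := hS.1 a (by simp) b (by simp) hne
    rw [Finset.prod_pair hne]
    show Fmap k v a * Fmap k v b = _
    unfold Fmap
    rw [Finset.sum_mul_sum]
    dsimp only
    rw [← Finset.sum_product']
    apply Finset.sum_congr rfl
    rintro ⟨P, Q⟩ hPQ
    rw [Finset.mem_product] at hPQ
    exact (Finset.prod_union
      (parts_disjoint hab (mem_parts.mp hPQ.1) (mem_parts.mp hPQ.2))).symm
  have hbij : ∑ z ∈ (pairsSet k s).sigma (fun p => (parts k p.1) ×ˢ (parts k p.2)),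
        ∏ a ∈ z.2.1 ∪ z.2.2, v a
      = ∑ y ∈ (parts k s).sigma (fun R => splits k R), ∏ a ∈ y.1, v a := by
    apply Finset.sum_nbij'
      (i := fun z => (⟨z.2.1 ∪ z.2.2, z.2.1⟩ : Σ _ : Finset (Fin (2 ^ k - 1)), Finset (Fin (2 ^ k - 1))))
      (j := fun y => (⟨(toFin k s (∑ a ∈ y.2, (a.val + 1)),
          toFin k s (∑ a ∈ y.1 \ y.2, (a.val + 1))), (y.2, y.1 \ y.2)⟩ :
            Σ _ : Fin (2 ^ k - 1) × Fin (2 ^ k - 1),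
              Finset (Fin (2 ^ k - 1)) × Finset (Fin (2 ^ k - 1))))
    · rintro ⟨⟨a, b⟩, P, Q⟩ hz
      simp only [Finset.mem_sigma, Finset.mem_product, mem_parts, pairsSet, Finset.mem_filter,
        Finset.mem_univ, true_and] at hz
      obtain ⟨⟨hlt, hS⟩, hPa, hQb⟩ := hz
      have hne : a ≠ b := ne_of_lt hlt
      have hab : (a.val + 1) &&& (b.val + 1) = 0 := hS.1 a (by simp) b (by simp) hne
      have hsum : (a.val + 1) + (b.val + 1) = s.val + 1 := by
        have h2 := hS.2
        rwa [Finset.sum_pair hne] at h2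
      have hdisj := parts_disjoint hab hPa hQb
      have hQsd : (P ∪ Q) \ P = Q := Finset.union_sdiff_cancel_left hdisj
      simp only [Finset.mem_sigma, mem_parts, splits, Finset.mem_filter, Finset.mem_powerset]
      refine ⟨parts_union hab hsum hPa hQb, Finset.subset_union_left, ?_, ?_, ?_⟩
      · exact (ukPartition_nonempty hPa).ne_empty
      · intro h
        rw [← h, Finset.sdiff_self] at hQsd
        exact (ukPartition_nonempty hQb).ne_empty hQsd.symm
      · rw [hQsd, hPa.2, hQb.2]
        have := hlt
        rw [Fin.lt_def] at this
        omega
    · rintro ⟨R, P⟩ hy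
      simp only [Finset.mem_sigma, mem_parts, splits, Finset.mem_filter,
        Finset.mem_powerset] at hy
      obtain ⟨hR, hPR, hPne, hPneR, hord⟩ := hy
      have hPnonempty : P.Nonempty := Finset.nonempty_iff_ne_empty.mpr hPne
      have hQnonempty : (R \ P).Nonempty := by
        rw [Finset.sdiff_nonempty]
        intro hle
        exact hPneR (Finset.Subset.antisymm hPR hle)
      have hsplit : (∑ a ∈ R \ P, (a.val + 1)) + ∑ a ∈ P, (a.val + 1) = s.val + 1 := by
        rw [Finset.sum_sdiff hPR, hR.2]
      have hsP1 : 1 ≤ ∑ a ∈ P, (a.val + 1) := sum_mask_pos hPnonempty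
      have hsQ1 : 1 ≤ ∑ a ∈ R \ P, (a.val + 1) := sum_mask_pos hQnonempty
      have hsb : s.val < 2 ^ k - 1 := s.isLt
      have htfP : (toFin k s (∑ a ∈ P, (a.val + 1))).val = (∑ a ∈ P, (a.val + 1)) - 1 := by
        unfold toFin
        rw [dif_pos (by omega)]
      have htfQ : (toFin k s (∑ a ∈ R \ P, (a.val + 1))).val
          = (∑ a ∈ R \ P, (a.val + 1)) - 1 := by
        unfold toFin
        rw [dif_pos (by omega)]
      have hd : ((toFin k s (∑ a ∈ P, (a.val + 1))).val + 1) &&&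
          ((toFin k s (∑ a ∈ R \ P, (a.val + 1))).val + 1) = 0 := by
        rw [htfP, htfQ, show (∑ a ∈ P, (a.val + 1)) - 1 + 1 = ∑ a ∈ P, (a.val + 1) by omega,
          show (∑ a ∈ R \ P, (a.val + 1)) - 1 + 1 = ∑ a ∈ R \ P, (a.val + 1) by omega]
        exact cross_sum_disj hR hPR
      have hne : toFin k s (∑ a ∈ P, (a.val + 1)) ≠ toFin k s (∑ a ∈ R \ P, (a.val + 1)) := by
        intro h
        have hv := congrArg Fin.val h
        rw [htfP, htfQ] at hv
        exact cross_sum_ne hR hPR hPnonempty (by omega)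
      simp only [Finset.mem_sigma, Finset.mem_product, mem_parts, pairsSet, Finset.mem_filter,
        Finset.mem_univ, true_and]
      refine ⟨⟨?_, ?_, ?_⟩, ?_, ?_⟩
      · rw [Fin.lt_def, htfP, htfQ]
        omega
      · intro x hx y hy hxy
        simp only [Finset.mem_insert, Finset.mem_singleton] at hx hy
        rcases hx with rfl | rfl <;> rcases hy with rfl | rfl
        · exact absurd rfl hxy
        · exact hd
        · rw [Nat.and_comm]
          exact hd
        · exact absurd rfl hxy
      · rw [Finset.sum_pair hne, htfP, htfQ]
        omega
      · exact ⟨sub_partition hR hPR, by rw [htfP]; omega⟩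
      · exact ⟨sub_partition hR Finset.sdiff_subset, by rw [htfQ]; omega⟩
    · rintro ⟨⟨a, b⟩, P, Q⟩ hz
      simp only [Finset.mem_sigma, Finset.mem_product, mem_parts, pairsSet, Finset.mem_filter,
        Finset.mem_univ, true_and] at hz
      obtain ⟨⟨hlt, hS⟩, hPa, hQb⟩ := hz
      have hne : a ≠ b := ne_of_lt hlt
      have hab : (a.val + 1) &&& (b.val + 1) = 0 := hS.1 a (by simp) b (by simp) hne
      have hdisj := parts_disjoint hab hPa hQb
      have hQsd : (P ∪ Q) \ P = Q := Finset.union_sdiff_cancel_left hdisj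
      show (⟨(toFin k s (∑ a ∈ P, (a.val + 1)),
          toFin k s (∑ a ∈ (P ∪ Q) \ P, (a.val + 1))), (P, (P ∪ Q) \ P)⟩ :
            Σ _ : Fin (2 ^ k - 1) × Fin (2 ^ k - 1),
              Finset (Fin (2 ^ k - 1)) × Finset (Fin (2 ^ k - 1))) = ⟨(a, b), (P, Q)⟩
      rw [hQsd, hPa.2, hQb.2, toFin_mask, toFin_mask]
    · rintro ⟨R, P⟩ hy
      simp only [Finset.mem_sigma, mem_parts, splits, Finset.mem_filter,
        Finset.mem_powerset] at hy
      show (⟨P ∪ (R \ P), P⟩ :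
          Σ _ : Finset (Fin (2 ^ k - 1)), Finset (Fin (2 ^ k - 1))) = ⟨R, P⟩
      rw [Finset.union_sdiff_of_subset hy.2.1]
    · rintro ⟨⟨a, b⟩, P, Q⟩ _
      rfl
  have hcount : ∑ y ∈ (parts k s).sigma (fun R => splits k R), ∏ a ∈ y.1, v a
      = ∑ R ∈ parts k s, ((splits k R).card : ZMod 2) * ∏ a ∈ R, v a := by
    rw [Finset.sum_sigma]
    apply Finset.sum_congr rfl
    intro R _
    dsimp only
    rw [Finset.sum_const, nsmul_eq_mul]
  rw [hquad, hbij, hcount]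
  have hsplitval : ∀ R ∈ parts k s, ((splits k R).card : ZMod 2) * ∏ a ∈ R, v a
      = (if R.card = 1 then 0 else 1) * ∏ a ∈ R, v a := fun R hR => by
    rw [splits_card (mem_parts.mp hR)]
  rw [Finset.sum_congr rfl hsplitval]
  show (∑ R ∈ parts k s, ∏ a ∈ R, v a) + _ = v s
  rw [← Finset.sum_add_distrib]
  have hterm : ∀ R ∈ parts k s,
      ((∏ a ∈ R, v a) + (if R.card = 1 then 0 else 1) * ∏ a ∈ R, v a)
        = if R.card = 1 then ∏ a ∈ R, v a else 0 := by
    intro R _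
    by_cases h : R.card = 1
    · simp [h]
    · rw [if_neg h, if_neg h, one_mul]
      exact CharTwo.add_self_eq_zero _
  rw [Finset.sum_congr rfl hterm, ← Finset.sum_filter, parts_card_one, Finset.sum_singleton,
    Finset.prod_singleton]

end GFsection

/-- The permutation `U_k` as an equivalence. -/
noncomputable def ukEquiv (k : ℕ) : QV (2 ^ k - 1) ≃ QV (2 ^ k - 1) where
  toFun := Fmap k
  invFun := Gmap k
  left_inv := fun v => funext fun s => GF v s
  right_inv := by
    have hG : ∀ v, Gmap k (Fmap k v) = v := fun v => funext fun s => GF v s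
    have hinj : Function.Injective (Fmap k) := fun u v' h => by
      rw [← hG u, ← hG v', h]
    have hsurj : Function.Surjective (Fmap k) :=
      (Finite.injective_iff_surjective).mp hinj
    intro w
    obtain ⟨v, rfl⟩ := hsurj w
    exact congrArg (Fmap k) (hG v)

theorem parts_filter_eq (k : ℕ) (s : Fin (2 ^ k - 1)) (S : Finset (Fin (2 ^ k - 1))) :
    (parts k s).filter (fun M => M ⊆ S)
      = (S.powerset.erase ∅).filter (fun T => ukPartition k T s) := by
  ext M
  simp only [Finset.mem_filter, mem_parts, Finset.mem_erase, Finset.mem_powerset]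
  constructor
  · rintro ⟨hP, hsub⟩
    exact ⟨⟨(ukPartition_nonempty hP).ne_empty, hsub⟩, hP⟩
  · rintro ⟨⟨-, hsub⟩, hP⟩
    exact ⟨hP, hsub⟩

/-- the polynomial representations of `U_k` and `U_k⁻¹`. The coordinate
`π_S` of `U_k` is the sum of `a_{T₁}⋯a_{T_m}` over all partitions of `S` into nonempty
parts, i.e. its multilinear coefficient at a monomial `M` is `1` iff `M` is a partition
of `S`; the coordinate `π'_S` of `U_k⁻¹` is `a_S + ∑_{T₁⊔T₂=S} a_{T₁}a_{T₂}`, i.e. its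
coefficient at `M` is `1` iff `M = {S}` or `M` is a two-part partition of `S`. -/
theorem stmt9 (k : ℕ) (hk : 3 ≤ k) :
    ∃ f : QV (2 ^ k - 1) ≃ QV (2 ^ k - 1),
      dmPiSpec (2 ^ k - 1) (ukMul k) ⇑f ∧
      (∀ (s : Fin (2 ^ k - 1)) (M : Finset (Fin (2 ^ k - 1))),
        mlCoeff (2 ^ k - 1) (fun v => f v s) M = 1 ↔ ukPartition k M s) ∧
      (∀ (s : Fin (2 ^ k - 1)) (M : Finset (Fin (2 ^ k - 1))),
        mlCoeff (2 ^ k - 1) (fun v => f.symm v s) M = 1 ↔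
          (M = {s} ∨ (M.card = 2 ∧ ukPartition k M s))) := by
  refine ⟨ukEquiv k, ?_, ?_, ?_⟩
  · intro S
    funext s
    show Fmap k (∑ i ∈ S, stdBasis (2 ^ k - 1) i) s = _
    have hL : Fmap k (∑ i ∈ S, stdBasis (2 ^ k - 1) i) s
        = ∑ M ∈ parts k s, if M ⊆ S then (1 : ZMod 2) else 0 := by
      unfold Fmap
      apply Finset.sum_congr rfl
      intro M _
      rw [← prodIndicator01 S M]
      exact Finset.prod_congr rfl fun a _ => by rw [sum_stdBasis_apply]
    have hR : (∑ T ∈ S.powerset.erase ∅, dmProd (2 ^ k - 1) (ukMul k) T) s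
        = ∑ T ∈ S.powerset.erase ∅, if ukPartition k T s then (1 : ZMod 2) else 0 := by
      rw [Finset.sum_apply]
      apply Finset.sum_congr rfl
      intro T hT
      have hTne : T.Nonempty := by
        rw [Finset.mem_erase] at hT
        exact Finset.nonempty_iff_ne_empty.mpr hT.1
      exact dmProd_eq T hTne s
    rw [hL, hR, Finset.sum_boole, Finset.sum_boole, parts_filter_eq k s S]
  · intro s M
    show mlCoeff (2 ^ k - 1) (fun v => ∑ M ∈ parts k s, ∏ a ∈ M, v a) M = 1 ↔ _
    rw [mlCoeff_poly, ite_one_zero_eq_one, mem_parts]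
  · intro s M
    show mlCoeff (2 ^ k - 1)
      (fun v => ∑ M ∈ insert {s} (parts2 k s), ∏ a ∈ M, v a) M = 1 ↔ _
    rw [mlCoeff_poly, ite_one_zero_eq_one]
    simp only [Finset.mem_insert, parts2, Finset.mem_filter, mem_parts]
    tauto
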